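/- Let N ≥ 1 and let M be any real N×N matrix. Then the minimum over all orthogonal N×N matrices R of Σ_{i=1}^N |⟨M R e_i, R e_i⟩| equals |tr M|; that is, |tr M| is a lower bound for this quantity over all orthogonal R, and the bound is attained by some orthogonal matrix R. -/

import Mathlib

open scoped RealInnerProductSpace Matrix

lemma trace_eq_sum_inner_onb {E : Type} [NormedAddCommGroup E] [InnerProductSpace ℝ E]
    [FiniteDimensional ℝ E] {ι : Type} [Fintype ι] [DecidableEq ι]
    (b : OrthonormalBasis ι ℝ E) (T : E →ₗ[ℝ] E) :
    LinearMap.trace ℝ E T = ∑ i, ⟪T (b i), b i⟫ := by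
  rw [LinearMap.trace_eq_matrix_trace ℝ b.toBasis T, Matrix.trace]
  congr 1
  ext i
  rw [Matrix.diag_apply, LinearMap.toMatrix_apply, b.coe_toBasis_repr_apply,
    b.repr_apply_apply, real_inner_comm, OrthonormalBasis.coe_toBasis]

lemma exists_onb_const_diag :
    ∀ (n : ℕ) (E : Type) [NormedAddCommGroup E] [InnerProductSpace ℝ E]
      [FiniteDimensional ℝ E], Module.finrank ℝ E = n →
      ∀ (T : E →ₗ[ℝ] E), T.IsSymmetric →
      ∃ b : OrthonormalBasis (Fin n) ℝ E,
        ∀ i, ⟪T (b i), b i⟫ = LinearMap.trace ℝ E T / n := by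
  intro n
  induction n with
  | zero =>
    intro E _ _ _ hn T hT
    exact ⟨(stdOrthonormalBasis ℝ E).reindex (finCongr hn), fun i => i.elim0⟩
  | succ n IH =>
    intro E _ _ _ hn T hT
    set t := LinearMap.trace ℝ E T with ht
    set c : ℝ := t / (n + 1 : ℕ) with hc
    -- eigen decomposition
    let b0 := hT.eigenvectorBasis hn
    let μ : Fin (n+1) → ℝ := hT.eigenvalues hn
    have happ : ∀ i, T (b0 i) = μ i • b0 i := fun i => hT.apply_eigenvectorBasis hn i
    have hnorm1 : ∀ i, ⟪b0 i, b0 i⟫ = 1 := by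
      intro i
      rw [real_inner_self_eq_norm_sq, b0.orthonormal.1 i, one_pow]
    have hdiag : ∀ i, ⟪T (b0 i), b0 i⟫ = μ i := by
      intro i
      rw [happ, real_inner_smul_left, hnorm1, mul_one]
    have htr : t = ∑ i, μ i := by
      rw [ht, trace_eq_sum_inner_onb b0 T]
      exact Finset.sum_congr rfl fun i _ => hdiag i
    obtain ⟨i0, -, h0⟩ := Finset.exists_min_image Finset.univ μ ⟨0, Finset.mem_univ 0⟩
    obtain ⟨i1, -, h1⟩ := Finset.exists_max_image Finset.univ μ ⟨0, Finset.mem_univ 0⟩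
    have hcard : ((n : ℝ) + 1) ≠ 0 := by positivity
    have h0c : μ i0 ≤ c := by
      rw [hc, le_div_iff₀ (by positivity)]
      push_cast
      calc μ i0 * ((n:ℝ) + 1) = ∑ _i : Fin (n+1), μ i0 := by
              simp [Finset.sum_const, mul_comm]
        _ ≤ ∑ i, μ i := Finset.sum_le_sum fun i _ => h0 i (Finset.mem_univ i)
        _ = t := htr.symm
    have h1c : c ≤ μ i1 := by
      rw [hc, div_le_iff₀ (by positivity)]
      push_cast
      calc t = ∑ i, μ i := htr
        _ ≤ ∑ _i : Fin (n+1), μ i1 := Finset.sum_le_sum fun i _ => h1 i (Finset.mem_univ i)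
        _ = μ i1 * ((n:ℝ) + 1) := by simp [Finset.sum_const, mul_comm]
    -- a unit vector achieving the mean value c
    have hvex : ∃ v : E, ‖v‖ = 1 ∧ ⟪T v, v⟫ = c := by
      rcases eq_or_lt_of_le h0c with h | h
      · exact ⟨b0 i0, b0.orthonormal.1 i0, by rw [hdiag]; exact h⟩
      · have hlt : μ i0 < μ i1 := lt_of_lt_of_le h h1c
        have hne : i0 ≠ i1 := fun e => absurd (e ▸ hlt) (lt_irrefl _)
        set s : ℝ := (c - μ i0) / (μ i1 - μ i0) with hs
        have hs0 : 0 ≤ s := div_nonneg (by linarith) (by linarith)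
        have hs1 : s ≤ 1 := by rw [hs, div_le_one (by linarith)]; linarith
        set a := Real.sqrt (1 - s) with hadef
        set b := Real.sqrt s with hbdef
        have ha2 : a ^ 2 = 1 - s := Real.sq_sqrt (by linarith)
        have hb2 : b ^ 2 = s := Real.sq_sqrt hs0
        have huw : ⟪b0 i0, b0 i1⟫ = 0 := b0.orthonormal.2 hne
        have hwu : ⟪b0 i1, b0 i0⟫ = 0 := by rw [real_inner_comm]; exact huw
        refine ⟨a • b0 i0 + b • b0 i1, ?_, ?_⟩
        · have hinner : ⟪a • b0 i0 + b • b0 i1, a • b0 i0 + b • b0 i1⟫ = 1 := by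
            simp only [inner_add_left, inner_add_right, real_inner_smul_left,
              real_inner_smul_right, hnorm1, huw, hwu, mul_zero, mul_one, add_zero, zero_add]
            nlinarith [ha2, hb2]
          have := real_inner_self_eq_norm_sq (a • b0 i0 + b • b0 i1)
          rw [hinner] at this
          have hnn := norm_nonneg (a • b0 i0 + b • b0 i1)
          nlinarith [this, hnn]
        · have : T (a • b0 i0 + b • b0 i1) = (a * μ i0) • b0 i0 + (b * μ i1) • b0 i1 := by
            rw [map_add, map_smul, map_smul, happ, happ, smul_smul, smul_smul]
          rw [this]
          simp only [inner_add_left, inner_add_right, real_inner_smul_left,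
            real_inner_smul_right, hnorm1, huw, hwu, mul_zero, mul_one, add_zero, zero_add]
          have hsmul : s * (μ i1 - μ i0) = c - μ i0 :=
            div_mul_cancel₀ _ (sub_ne_zero.mpr hlt.ne')
          rw [show a * (a * μ i0) + b * (b * μ i1) = a ^ 2 * μ i0 + b ^ 2 * μ i1 by ring,
            ha2, hb2]
          linear_combination hsmul
    obtain ⟨v, hv1, hvc⟩ := hvex
    have hvne : v ≠ 0 := by
      intro e; rw [e, norm_zero] at hv1; norm_num at hv1
    set K := (ℝ ∙ v)ᗮ with hKdef
    have hK : Module.finrank ℝ K = n := by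
      have h1 : Module.finrank ℝ (ℝ ∙ v) = 1 := finrank_span_singleton hvne
      have h2 := Submodule.finrank_add_finrank_orthogonal (ℝ ∙ v)
      rw [← hKdef] at h2
      omega
    set T' : K →ₗ[ℝ] K :=
      (K.orthogonalProjectionOnto).toLinearMap ∘ₗ (T ∘ₗ K.subtype) with hT'def
    have hT'app : ∀ x : K, T' x = K.orthogonalProjectionOnto (T (x : E)) := fun x => rfl
    have hT'sym : T'.IsSymmetric := by
      intro x y
      rw [hT'app, hT'app, Submodule.inner_orthogonalProjectionOnto_eq_of_mem_right,
        Submodule.inner_orthogonalProjectionOnto_eq_of_mem_left]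
      exact hT (x : E) (y : E)
    have hinner' : ∀ x : K, ⟪T' x, x⟫ = ⟪T (x : E), (x : E)⟫ := by
      intro x
      rw [hT'app, Submodule.inner_orthogonalProjectionOnto_eq_of_mem_right]
    obtain ⟨bK, hbK⟩ := IH K hK T' hT'sym
    -- combine v and bK into an orthonormal basis of E
    set f : Fin (n+1) → E := Fin.cons v (fun i => (bK i : E)) with hf
    have hvK : ∀ i, ⟪v, (bK i : E)⟫ = 0 := by
      intro i
      exact (bK i).2 v (Submodule.mem_span_singleton_self v)
    have honb : Orthonormal ℝ f := by
      rw [orthonormal_iff_ite]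
      intro i j
      refine Fin.cases ?_ ?_ i <;> [skip; intro i'] <;>
        refine Fin.cases ?_ ?_ j <;> [skip; intro j'; skip; intro j']
      · simp [hf, real_inner_self_eq_norm_sq, hv1]
      · simp only [hf, Fin.cons_zero, Fin.cons_succ]
        rw [if_neg (Ne.symm (Fin.succ_ne_zero j'))]
        exact hvK j'
      · simp only [hf, Fin.cons_zero, Fin.cons_succ]
        rw [if_neg (Fin.succ_ne_zero i'), real_inner_comm]
        exact hvK i'
      · simp only [hf, Fin.cons_succ]
        have := (orthonormal_iff_ite.mp bK.orthonormal) i' j'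
        rw [Submodule.coe_inner] at this
        rw [this]
        simp [Fin.succ_inj]
    have hcardeq : Fintype.card (Fin (n+1)) = Module.finrank ℝ E := by
      simp [hn]
    let B0 : Module.Basis (Fin (n+1)) ℝ E :=
      basisOfLinearIndependentOfCardEqFinrank honb.linearIndependent hcardeq
    have hB0 : ⇑B0 = f := coe_basisOfLinearIndependentOfCardEqFinrank _ _
    let B : OrthonormalBasis (Fin (n+1)) ℝ E := B0.toOrthonormalBasis (by rw [hB0]; exact honb)
    have hB : ⇑B = f := by
      rw [show ⇑B = ⇑B0 from Module.Basis.coe_toOrthonormalBasis B0 _, hB0]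
    refine ⟨B, ?_⟩
    have hB0v : B 0 = v := by rw [hB]; simp [hf]
    have hBsucc : ∀ i : Fin n, B i.succ = (bK i : E) := by
      intro i; rw [hB]; simp [hf]
    -- trace identity
    have htr2 : t = c + ∑ i : Fin n, ⟪T (bK i : E), (bK i : E)⟫ := by
      rw [ht, trace_eq_sum_inner_onb B T, Fin.sum_univ_succ, hB0v, hvc]
      congr 1
      exact Finset.sum_congr rfl fun i _ => by rw [hBsucc]
    intro i
    refine Fin.cases ?_ ?_ i
    · rw [hB0v, hvc, hc]
    · intro i'
      have hnpos : 0 < n := i'.pos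
      have hnne : (n : ℝ) ≠ 0 := Nat.cast_ne_zero.mpr hnpos.ne'
      have htrK : LinearMap.trace ℝ K T' = t - c := by
        have hsum : ∑ j : Fin n, ⟪T (bK j : E), (bK j : E)⟫ = LinearMap.trace ℝ ↥K T' := by
          rw [trace_eq_sum_inner_onb bK T']
          exact Finset.sum_congr rfl fun j _ => (hinner' (bK j)).symm
        linarith [htr2, hsum]
      rw [hBsucc i', ← hinner' (bK i'), hbK i', htrK, hc]
      have h1 : ((n:ℝ) + 1) ≠ 0 := by positivity
      push_cast
      field_simp
      ring

lemma inner_toEuclideanLin_eq {N : ℕ} (A : Matrix (Fin N) (Fin N) ℝ)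
    (x y : EuclideanSpace ℝ (Fin N)) :
    ⟪Matrix.toEuclideanLin A x, y⟫ = ∑ i, ∑ j, A i j * x j * y i := by
  rw [PiLp.inner_apply]
  refine Finset.sum_congr rfl fun i _ => ?_
  show y i * (starRingEnd ℝ) ((A *ᵥ x.ofLp) i) = _
  rw [mul_comm]
  simp [Matrix.mulVec, dotProduct, Finset.sum_mul]

lemma toEuclideanLin_single_apply {N : ℕ} (R : Matrix (Fin N) (Fin N) ℝ) (i k : Fin N) :
    (Matrix.toEuclideanLin R (EuclideanSpace.single i 1)) k = R k i := by
  show (R *ᵥ (WithLp.equiv 2 _ (EuclideanSpace.single i 1))) k = R k i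
  simp [Matrix.mulVec, dotProduct, EuclideanSpace.single_apply, mul_ite,
    Finset.sum_ite_eq]

/-- For any real `N×N` matrix `M` (`N ≥ 1`), the minimum over orthogonal matrices `R` of
`Σᵢ |⟨M R eᵢ, R eᵢ⟩|` equals `|tr M|`: it is a lower bound and it is attained. -/
theorem isLeast_sum_abs_quadratic_form_over_orthogonal
    (N : ℕ) (hN : 1 ≤ N) (M : Matrix (Fin N) (Fin N) ℝ) :
    IsLeast {s : ℝ | ∃ R : Matrix (Fin N) (Fin N) ℝ, R * Rᵀ = 1 ∧ Rᵀ * R = 1 ∧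
        s = ∑ i : Fin N,
          |⟪Matrix.toEuclideanLin M (Matrix.toEuclideanLin R (EuclideanSpace.single i 1)),
            Matrix.toEuclideanLin R (EuclideanSpace.single i 1)⟫|}
      |M.trace| := by
  have hNne : (N : ℝ) ≠ 0 := Nat.cast_ne_zero.mpr (by omega)
  set Msym : Matrix (Fin N) (Fin N) ℝ := (2⁻¹ : ℝ) • (M + Mᵀ) with hMsym
  have hherm : Msym.IsHermitian := by
    ext i j
    simp only [hMsym, Matrix.conjTranspose_apply, Matrix.smul_apply, Matrix.add_apply,
      Matrix.transpose_apply, star_trivial, smul_eq_mul]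
    ring
  have hsymlin : (Matrix.toEuclideanLin Msym).IsSymmetric :=
    Matrix.isHermitian_iff_isSymmetric.mp hherm
  have hquad : ∀ x : EuclideanSpace ℝ (Fin N),
      ⟪Matrix.toEuclideanLin M x, x⟫ = ⟪Matrix.toEuclideanLin Msym x, x⟫ := by
    intro x
    rw [inner_toEuclideanLin_eq, inner_toEuclideanLin_eq]
    have expand : ∀ i j, Msym i j * x j * x i
        = 2⁻¹ * (M i j * x j * x i) + 2⁻¹ * (M j i * x j * x i) := by
      intro i j
      simp only [hMsym, Matrix.smul_apply, Matrix.add_apply, Matrix.transpose_apply,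
        smul_eq_mul]
      ring
    have hswap : (∑ i : Fin N, ∑ j : Fin N, M j i * x j * x i)
        = ∑ i : Fin N, ∑ j : Fin N, M i j * x j * x i := by
      rw [Finset.sum_comm]
      exact Finset.sum_congr rfl fun i _ => Finset.sum_congr rfl fun j _ => by ring
    simp only [expand, Finset.sum_add_distrib, ← Finset.mul_sum]
    rw [hswap]
    ring
  have htrlin : LinearMap.trace ℝ (EuclideanSpace ℝ (Fin N)) (Matrix.toEuclideanLin Msym)
      = M.trace := by
    rw [trace_eq_sum_inner_onb (EuclideanSpace.basisFun (Fin N) ℝ) _]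
    have hdiag : ∀ i, ⟪Matrix.toEuclideanLin Msym ((EuclideanSpace.basisFun (Fin N) ℝ) i),
        (EuclideanSpace.basisFun (Fin N) ℝ) i⟫ = Msym i i := by
      intro i
      rw [EuclideanSpace.basisFun_apply, inner_toEuclideanLin_eq]
      simp [EuclideanSpace.single_apply, mul_ite, Finset.sum_ite_eq]
    rw [Finset.sum_congr rfl fun i _ => hdiag i]
    simp only [hMsym, Matrix.trace, Matrix.diag_apply, Matrix.smul_apply, Matrix.add_apply,
      Matrix.transpose_apply, smul_eq_mul]
    exact Finset.sum_congr rfl fun i _ => by ring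
  obtain ⟨B, hB⟩ := exists_onb_const_diag N (EuclideanSpace ℝ (Fin N))
    finrank_euclideanSpace_fin (Matrix.toEuclideanLin Msym) hsymlin
  constructor
  · -- membership : the bound is attained
    set R : Matrix (Fin N) (Fin N) ℝ := Matrix.of fun k i => B i k with hR
    have hcol : ∀ i, Matrix.toEuclideanLin R (EuclideanSpace.single i 1) = B i := by
      intro i
      ext k
      rw [toEuclideanLin_single_apply]
      rfl
    have hinner2 : ∀ i j : Fin N, ∑ k, B i k * B j k = if i = j then (1:ℝ) else 0 := by
      intro i j
      have h := orthonormal_iff_ite.mp B.orthonormal i j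
      rw [PiLp.inner_apply] at h
      simpa [mul_comm] using h
    have hRtR : Rᵀ * R = 1 := by
      ext i j
      rw [Matrix.mul_apply, Matrix.one_apply]
      exact hinner2 i j
    have hRRt : R * Rᵀ = 1 := mul_eq_one_comm.mpr hRtR
    refine ⟨R, hRRt, hRtR, ?_⟩
    have hval : ∀ i, ⟪Matrix.toEuclideanLin M
          (Matrix.toEuclideanLin R (EuclideanSpace.single i 1)),
        Matrix.toEuclideanLin R (EuclideanSpace.single i 1)⟫ = M.trace / N := by
      intro i
      rw [hcol i, hquad (B i), hB i, htrlin]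
    rw [Finset.sum_congr rfl fun i _ => congrArg abs (hval i), Finset.sum_const,
      Finset.card_univ, Fintype.card_fin, nsmul_eq_mul, abs_div, Nat.abs_cast, mul_comm,
      div_mul_cancel₀ _ hNne]
  · -- lower bound
    rintro s ⟨R, hRRt, hRtR, rfl⟩
    have hterm : ∀ i, ⟪Matrix.toEuclideanLin M
          (Matrix.toEuclideanLin R (EuclideanSpace.single i 1)),
        Matrix.toEuclideanLin R (EuclideanSpace.single i 1)⟫
        = ∑ k, ∑ j, M k j * R j i * R k i := by
      intro i
      rw [inner_toEuclideanLin_eq]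
      exact Finset.sum_congr rfl fun k _ => Finset.sum_congr rfl fun j _ => by
        rw [toEuclideanLin_single_apply, toEuclideanLin_single_apply]
    have hsum : (∑ i : Fin N, ∑ k, ∑ j, M k j * R j i * R k i) = M.trace := by
      rw [Finset.sum_comm]
      have h1 : ∀ k, (∑ i : Fin N, ∑ j, M k j * R j i * R k i)
          = ∑ j, M k j * ∑ i, (R j i * R k i) := by
        intro k
        rw [Finset.sum_comm]
        refine Finset.sum_congr rfl fun j _ => ?_
        rw [Finset.mul_sum]
        exact Finset.sum_congr rfl fun i _ => by ring
      have h2 : ∀ j k, (∑ i, R j i * R k i) = (1 : Matrix (Fin N) (Fin N) ℝ) j k := by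
        intro j k
        rw [← hRRt, Matrix.mul_apply]
        exact Finset.sum_congr rfl fun i _ => rfl
      simp only [h1, h2, Matrix.one_apply, mul_ite, mul_one, mul_zero]
      simp [Matrix.trace, Matrix.diag]
    have htr : (∑ i : Fin N, ⟪Matrix.toEuclideanLin M
          (Matrix.toEuclideanLin R (EuclideanSpace.single i 1)),
        Matrix.toEuclideanLin R (EuclideanSpace.single i 1)⟫) = M.trace := by
      rw [Finset.sum_congr rfl fun i _ => hterm i]
      exact hsum
    calc |M.trace| = |∑ i : Fin N, ⟪Matrix.toEuclideanLin M
          (Matrix.toEuclideanLin R (EuclideanSpace.single i 1)),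
        Matrix.toEuclideanLin R (EuclideanSpace.single i 1)⟫| := by rw [htr]
      _ ≤ _ := Finset.abs_sum_le_sum_abs _ _
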